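/- The multiplicativity of i(H) = 1 - χ(H) under the Zykov join: for any two finite simple graphs A and B, 1 - χ(A + B) = (1 - χ(A))·(1 - χ(B)), where A + B is the join and χ is the Euler characteristic of the clique (Whitney) complex. -/

import Mathlib

open Finset

open scoped Classical in
/-- The Euler characteristic of the clique (Whitney) complex of a finite simple
graph: `χ(H) = ∑_{nonempty cliques c} (-1)^{|c|-1}`. -/
noncomputable def cliqueChi {W : Type*} [Fintype W] (H : SimpleGraph W) : ℚ :=
  ∑ c ∈ Finset.univ.filter
      (fun c : Finset W => c.Nonempty ∧ ∀ a ∈ c, ∀ b ∈ c, a ≠ b → H.Adj a b),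
    (-1 : ℚ) ^ (c.card - 1)

/-- The (Zykov) join `A + B` of two graphs: disjoint union together with all
edges between vertices of `A` and vertices of `B`. -/
def graphJoin {α β : Type*} (A : SimpleGraph α) (B : SimpleGraph β) :
    SimpleGraph (α ⊕ β) where
  Adj u v :=
    match u, v with
    | Sum.inl a, Sum.inl a' => A.Adj a a'
    | Sum.inr b, Sum.inr b' => B.Adj b b'
    | _, _ => True
  symm := by
    constructor
    rintro (a | b) (a' | b') h
    · exact A.adj_symm h
    · trivial
    · trivial
    · exact B.adj_symm h
  loopless := by
    constructor
    rintro (a | b) h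
    · exact A.irrefl h
    · exact B.irrefl h

open scoped Classical in
lemma one_sub_chi {W : Type*} [Fintype W] (H : SimpleGraph W) :
    1 - cliqueChi H = ∑ c ∈ Finset.univ.filter
      (fun c : Finset W => ∀ a ∈ c, ∀ b ∈ c, a ≠ b → H.Adj a b),
    (-1 : ℚ) ^ c.card := by
  have hsplit : (Finset.univ.filter
      (fun c : Finset W => ∀ a ∈ c, ∀ b ∈ c, a ≠ b → H.Adj a b)) =
      insert ∅ (Finset.univ.filter
      (fun c : Finset W => c.Nonempty ∧ ∀ a ∈ c, ∀ b ∈ c, a ≠ b → H.Adj a b)) := by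
    ext c
    simp only [mem_filter, mem_insert, mem_univ, true_and]
    constructor
    · intro h
      rcases c.eq_empty_or_nonempty with h0 | h0
      · exact Or.inl h0
      · exact Or.inr ⟨h0, h⟩
    · rintro (rfl | ⟨_, h⟩) <;> simp_all
  rw [hsplit, Finset.sum_insert (by simp)]
  simp only [card_empty, pow_zero]
  have : ∑ c ∈ Finset.univ.filter
      (fun c : Finset W => c.Nonempty ∧ ∀ a ∈ c, ∀ b ∈ c, a ≠ b → H.Adj a b),
      (-1 : ℚ) ^ c.card = - cliqueChi H := by
    rw [cliqueChi]
    refine Eq.trans (Finset.sum_congr rfl fun c hc => ?_) (Finset.sum_neg_distrib _)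
    simp only [mem_filter] at hc
    have h1 : 1 ≤ c.card := Finset.card_pos.mpr hc.2.1
    conv_lhs => rw [← Nat.sub_add_cancel h1]
    rw [pow_succ]
    ring
  rw [this]; ring

/-- the functional `i(H) = 1 - χ(H)` is multiplicative under the
Zykov join: `1 - χ(A + B) = (1 - χ(A))·(1 - χ(B))`. -/
theorem one_sub_cliqueChi_join {α β : Type*} [Fintype α] [Fintype β]
    (A : SimpleGraph α) (B : SimpleGraph β) :
    1 - cliqueChi (graphJoin A B) = (1 - cliqueChi A) * (1 - cliqueChi B) := by
  classical
  rw [one_sub_chi, one_sub_chi, one_sub_chi, Finset.sum_mul_sum, ← Finset.sum_product']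
  refine Finset.sum_nbij' (fun c => (c.toLeft, c.toRight)) (fun p => p.1.disjSum p.2)
    ?_ ?_ ?_ ?_ ?_
  · intro c hc
    simp only [mem_filter, mem_univ, true_and, Finset.mem_product] at hc ⊢
    constructor
    · intro x hx y hy hxy
      exact hc (Sum.inl x) (Finset.mem_toLeft.mp hx) (Sum.inl y) (Finset.mem_toLeft.mp hy) (by simpa)
    · intro x hx y hy hxy
      exact hc (Sum.inr x) (Finset.mem_toRight.mp hx) (Sum.inr y) (Finset.mem_toRight.mp hy) (by simpa)
  · intro p hp
    simp only [mem_filter, mem_univ, true_and, Finset.mem_product] at hp ⊢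
    rintro (x | x) hx (y | y) hy hxy
    · exact hp.1 x (by simpa using hx) y (by simpa using hy) (by simpa using hxy)
    · trivial
    · trivial
    · exact hp.2 x (by simpa using hx) y (by simpa using hy) (by simpa using hxy)
  · intro c hc
    exact Finset.toLeft_disjSum_toRight
  · intro p hp
    simp
  · intro c hc
    rw [← pow_add, Finset.card_toLeft_add_card_toRight]
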